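/- Let γ ∈ SL(2,ℝ) be hyperbolic and let p ∈ ℝP¹ satisfy γ · p = p. Then p is a uniform conical limit point of the cyclic subgroup ⟨γ⟩ generated by γ: there exist a compact set K ⊆ ℍ and an injective sequence (γ_k) of elements of ⟨γ⟩ with ray(p) ⊆ ⋃_k γ_k · K. -/

import Mathlib

open scoped MatrixGroups LinearAlgebra.Projectivization UpperHalfPlane Pointwise
open Matrix

noncomputable section

/-- The topology on `SL(2, ℝ)` as a subspace of the space of `2 × 2` real matrices. -/
instance : TopologicalSpace SL(2, ℝ) :=
  inferInstanceAs (TopologicalSpace { A : Matrix (Fin 2) (Fin 2) ℝ // A.det = 1 })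

/-- The real projective line. -/
abbrev RP1 : Type := ℙ ℝ (Fin 2 → ℝ)

instance : TopologicalSpace RP1 :=
  inferInstanceAs (TopologicalSpace (Quotient (projectivizationSetoid ℝ (Fin 2 → ℝ))))

/-- The action of `SL(2, ℝ)` on the real projective line, via its linear action on `ℝ²`. -/
def sl2Act (g : SL(2, ℝ)) (p : RP1) : RP1 :=
  Projectivization.map (Matrix.SpecialLinearGroup.toLin' g).toLinearMap
    (Matrix.SpecialLinearGroup.toLin' g).injective p

/-- The point `[x : 1]` of the real projective line. -/
def projPt (x : ℝ) : RP1 :=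
  Projectivization.mk ℝ ![x, 1] (by
    intro h
    have := congrFun h 1
    simp at this)

/-- The point `∞ = [1 : 0]` of the real projective line. -/
def projInf : RP1 :=
  Projectivization.mk ℝ ![1, 0] (by
    intro h
    have := congrFun h 0
    simp at this)

/-- The ray in the upper half-plane associated to a point of `ℝP¹`:
`ray [x:1] = {x + i t : 0 < t ≤ 1}` and `ray ∞ = {i t : t ≥ 1}`. -/
def ray (p : RP1) : Set ℍ :=
  if p.rep 1 = 0 then {z : ℍ | z.re = 0 ∧ 1 ≤ z.im}
  else {z : ℍ | z.re = p.rep 0 / p.rep 1 ∧ z.im ≤ 1}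

/-- An element of `SL(2, ℝ)` is hyperbolic if the absolute value of its trace exceeds `2`. -/
def IsHyperbolic (g : SL(2, ℝ)) : Prop :=
  2 < |Matrix.trace (g : Matrix (Fin 2) (Fin 2) ℝ)|

/-- A subgroup of `SL(2, ℝ)` is purely hyperbolic if all of its non-identity elements
are hyperbolic. -/
def PurelyHyperbolic (Γ : Subgroup SL(2, ℝ)) : Prop :=
  ∀ g ∈ Γ, g ≠ 1 → IsHyperbolic g

/-- A subgroup of `SL(2, ℝ)` is non-elementary if it is not virtually abelian, i.e. it has
no abelian subgroup of finite index. -/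
def IsNonElementary (Γ : Subgroup SL(2, ℝ)) : Prop :=
  ¬ ∃ H : Subgroup Γ, H.FiniteIndex ∧ ∀ a ∈ H, ∀ b ∈ H, a * b = b * a

/-- `p ∈ ℝP¹` is a conical limit point of `Γ'` if some compact subset of `ℍ` has infinitely
many `Γ'`-translates meeting the ray ending at `p`. -/
def IsConicalLimitPoint (Γ' : Subgroup SL(2, ℝ)) (p : RP1) : Prop :=
  ∃ K : Set ℍ, IsCompact K ∧ ∃ γ : ℕ → SL(2, ℝ), Function.Injective γ ∧
    (∀ k, γ k ∈ Γ') ∧ ∀ k, (γ k • K ∩ ray p).Nonempty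

/-- `p ∈ ℝP¹` is a uniform conical limit point of `Γ'` if the ray ending at `p` is covered by
the translates of a single compact subset of `ℍ` by an injective sequence in `Γ'`. -/
def IsUniformConicalLimitPoint (Γ' : Subgroup SL(2, ℝ)) (p : RP1) : Prop :=
  ∃ K : Set ℍ, IsCompact K ∧ ∃ γ : ℕ → SL(2, ℝ), Function.Injective γ ∧
    (∀ k, γ k ∈ Γ') ∧ ray p ⊆ ⋃ k, γ k • K

/-- The limit set of a subgroup of `SL(2, ℝ)`: the closure in `ℝP¹` of the set of fixed
points of hyperbolic elements of the subgroup. -/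
def limitSet (Γ' : Subgroup SL(2, ℝ)) : Set RP1 :=
  closure {p : RP1 | ∃ g ∈ Γ', IsHyperbolic g ∧ sl2Act g p = p}



section Aux

open UpperHalfPlane

lemma coe_sl_smul (g : SL(2,ℝ)) (z : ℍ) :
    ((g • z : ℍ) : ℂ) = ((g 0 0 : ℝ) * z + (g 0 1 : ℝ)) / ((g 1 0 : ℝ) * z + (g 1 1 : ℝ)) := by
  rw [UpperHalfPlane.specialLinearGroup_apply]; simp

lemma det_sl (g : SL(2,ℝ)) : g 0 0 * g 1 1 - g 0 1 * g 1 0 = 1 := by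
  have := g.2; rwa [Matrix.det_fin_two] at this

lemma step (δ : SL(2,ℝ)) (hc : δ 1 0 = 0) (z : ℍ) :
    ((δ • z : ℍ) : ℂ) = (δ 0 0)^2 * z + (δ 0 0) * (δ 0 1) := by
  have hdet := det_sl δ
  rw [hc, mul_zero, sub_zero] at hdet
  have ha : (δ 0 0 : ℝ) ≠ 0 := by rintro h; rw [h, zero_mul] at hdet; norm_num at hdet
  have hd : (δ 1 1 : ℝ) = (δ 0 0)⁻¹ := by field_simp; linarith [hdet]
  rw [coe_sl_smul, hc, hd]
  have : ((δ 0 0 : ℝ) : ℂ) ≠ 0 := by exact_mod_cast ha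
  push_cast
  field_simp
  ring

lemma zpow_smul (δ : SL(2,ℝ)) (hc : δ 1 0 = 0) (q : ℝ)
    (hq : q * (1 - (δ 0 0)^2) = δ 0 0 * δ 0 1) (n : ℤ) (z : ℍ) :
    ((δ ^ n • z : ℍ) : ℂ) = q + (((δ 0 0 : ℝ)^2)^n : ℝ) * ((z : ℂ) - q) := by
  have hdet := det_sl δ
  rw [hc, mul_zero, sub_zero] at hdet
  have ha : (δ 0 0 : ℝ) ≠ 0 := by rintro h; rw [h, zero_mul] at hdet; norm_num at hdet
  have hr0 : ((δ 0 0 : ℝ)^2 : ℝ) ≠ 0 := pow_ne_zero _ ha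
  have hr0' : (((δ 0 0 : ℝ) : ℂ)^2) ≠ 0 := by
    exact_mod_cast (show (((δ 0 0 : ℝ)^2 : ℝ) : ℂ) ≠ 0 by exact_mod_cast hr0)
  have key : ∀ (w : ℍ), ((δ • w : ℍ) : ℂ) = q + ((δ 0 0 : ℝ) : ℂ)^2 * ((w : ℂ) - q) := by
    intro w
    rw [step δ hc]
    have : ((q : ℝ) : ℂ) * (1 - ((δ 0 0 : ℝ) : ℂ)^2) = ((δ 0 0 : ℝ) : ℂ) * ((δ 0 1 : ℝ) : ℂ) := by
      exact_mod_cast congrArg (Complex.ofReal) hq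
    linear_combination (-1 : ℂ) * this
  have keyinv : ∀ (w : ℍ),
      ((δ⁻¹ • w : ℍ) : ℂ) = q + (((δ 0 0 : ℝ) : ℂ)^2)⁻¹ * ((w : ℂ) - q) := by
    intro w
    have h1 : ((δ • (δ⁻¹ • w) : ℍ) : ℂ) = q + ((δ 0 0 : ℝ) : ℂ)^2 * (((δ⁻¹ • w : ℍ) : ℂ) - q) :=
      key _
    rw [smul_inv_smul] at h1
    set u := ((δ⁻¹ • w : ℍ) : ℂ) with hu
    have h2 : ((δ 0 0 : ℝ) : ℂ)^2 * (u - q) = (w : ℂ) - q := by linear_combination -h1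
    have h3 : u - (q:ℂ) = (((δ 0 0 : ℝ) : ℂ)^2)⁻¹ * ((w : ℂ) - q) :=
      (eq_inv_mul_iff_mul_eq₀ hr0').mpr h2
    linear_combination h3
  induction n using Int.induction_on with
  | zero => simp
  | succ k ih =>
      have h3 : δ ^ ((k : ℤ) + 1) • z = δ • (δ ^ (k : ℤ) • z) := by
        rw [show ((k:ℤ)+1) = 1 + (k:ℤ) by ring, _root_.zpow_add, zpow_one, mul_smul]
      rw [h3, key, ih]
      push_cast
      rw [zpow_add_one₀ (by exact_mod_cast hr0')]
      ring
  | pred k ih =>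
      have h3 : δ ^ (-(k : ℤ) - 1) • z = δ⁻¹ • (δ ^ (-(k : ℤ)) • z) := by
        rw [show (-(k:ℤ)-1) = -1 + -(k:ℤ) by ring, _root_.zpow_add, mul_smul,
          _root_.zpow_neg_one]
      rw [h3, keyinv, ih]
      push_cast
      rw [zpow_sub_one₀ (by exact_mod_cast hr0')]
      ring

lemma im_zpow_smul (δ : SL(2,ℝ)) (hc : δ 1 0 = 0) (q : ℝ)
    (hq : q * (1 - (δ 0 0)^2) = δ 0 0 * δ 0 1) (n : ℤ) :
    (δ ^ n • (UpperHalfPlane.mk ((q : ℂ) + Complex.I) (by simp) : ℍ)).im = ((δ 0 0)^2)^n := by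
  rw [← UpperHalfPlane.coe_im, zpow_smul δ hc q hq n]
  simp
  norm_cast

lemma re_zpow_smul (δ : SL(2,ℝ)) (hc : δ 1 0 = 0) (q : ℝ)
    (hq : q * (1 - (δ 0 0)^2) = δ 0 0 * δ 0 1) (n : ℤ) :
    (δ ^ n • (UpperHalfPlane.mk ((q : ℂ) + Complex.I) (by simp) : ℍ)).re = q := by
  rw [← UpperHalfPlane.coe_re, zpow_smul δ hc q hq n]
  simp
  norm_cast

lemma sl2_zpow_injective (δ : SL(2,ℝ)) (hc : δ 1 0 = 0) (ha2 : (δ 0 0)^2 ≠ 1) :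
    Function.Injective fun n : ℤ => δ ^ n := by
  have hdet := det_sl δ
  rw [hc, mul_zero, sub_zero] at hdet
  have ha : (δ 0 0 : ℝ) ≠ 0 := by rintro h; rw [h, zero_mul] at hdet; norm_num at hdet
  have h1r : (1 : ℝ) - (δ 0 0)^2 ≠ 0 := by
    intro h; apply ha2; linarith
  set q : ℝ := (δ 0 0 * δ 0 1) / (1 - (δ 0 0)^2) with hqdef
  have hq : q * (1 - (δ 0 0)^2) = δ 0 0 * δ 0 1 := by
    rw [hqdef]; exact div_mul_cancel₀ _ h1r
  intro m n h
  have h2 := congrArg (fun g : SL(2,ℝ) =>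
    (g • (UpperHalfPlane.mk ((q : ℂ) + Complex.I) (by simp) : ℍ)).im) h
  simp only [im_zpow_smul δ hc q hq] at h2
  exact zpow_right_injective₀ (by positivity) ha2 h2

lemma core' (δ : SL(2,ℝ)) (hc : δ 1 0 = 0) (hr : 1 < (δ 0 0)^2) :
    ∃ K : Set ℍ, IsCompact K ∧
      ∀ z : ℍ, z.re = 0 → 1 ≤ z.im → ∃ k : ℕ, z ∈ (δ ^ (k : ℤ)) • K := by
  set a : ℝ := δ 0 0 with hadef
  set r : ℝ := a^2 with hrdef
  have hr0 : (0:ℝ) < r := lt_trans one_pos hr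
  have h1r : (1 : ℝ) - r ≠ 0 := by intro h; simp only [sub_eq_zero] at h; rw [← h] at hr; linarith
  set q : ℝ := (a * δ 0 1) / (1 - r) with hqdef
  have hq : q * (1 - r) = a * δ 0 1 := by rw [hqdef]; exact div_mul_cancel₀ _ h1r
  set z₀ : ℍ := UpperHalfPlane.mk ((q : ℂ) + Complex.I) (by simp) with hz₀
  set C : ℝ := 2 * Real.arsinh (|q| / 2 + (r - 1) / 2) with hC
  refine ⟨Metric.closedBall z₀ C, isCompact_closedBall _ _, ?_⟩
  intro z hre him
  set t : ℝ := z.im with ht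
  have ht1 : (1:ℝ) ≤ t := him
  obtain ⟨m, hm⟩ := pow_unbounded_of_one_lt t hr
  have hex : ∃ m : ℕ, t < r ^ m := ⟨m, hm⟩
  set n₀ : ℕ := Nat.find hex with hn₀
  have hn₀pos : n₀ ≠ 0 := by
    intro h
    have := Nat.find_spec hex
    rw [← hn₀, h] at this
    simp at this
    linarith
  set n : ℕ := n₀ - 1 with hn
  have hlow : r ^ n ≤ t := by
    have := Nat.find_min hex (m := n) (by omega)
    linarith [not_lt.mp this]
  have hhigh : t < r ^ (n + 1) := by
    have : n + 1 = n₀ := by omega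
    rw [this]
    exact Nat.find_spec hex
  set s : ℝ := r ^ n with hs
  have hs1 : (1:ℝ) ≤ s := one_le_pow₀ (le_of_lt hr)
  have hs0 : (0:ℝ) < s := lt_of_lt_of_le one_pos hs1
  have hhigh' : t ≤ s * r := by rw [hs, ← pow_succ]; exact le_of_lt hhigh
  set w : ℍ := δ ^ (n : ℤ) • z₀ with hw
  have hwim : w.im = s := by rw [hw, im_zpow_smul δ hc q hq]; norm_cast
  have hwre : w.re = q := re_zpow_smul δ hc q hq _
  have hdist : dist z w ≤ C := by
    rw [UpperHalfPlane.dist_eq, hC]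
    have h2 : dist (z : ℂ) (w : ℂ) ≤ |q| + (t - s) := by
      rw [Complex.dist_eq_re_im, UpperHalfPlane.coe_re, UpperHalfPlane.coe_re,
        UpperHalfPlane.coe_im, UpperHalfPlane.coe_im, hre, hwre, hwim, ← ht]
      have hts : 0 ≤ t - s := by linarith
      have : (0 - q)^2 + (t - s)^2 ≤ (|q| + (t - s))^2 := by
        nlinarith [sq_abs q, abs_nonneg q]
      calc √((0 - q)^2 + (t - s)^2) ≤ √((|q| + (t - s))^2) := Real.sqrt_le_sqrt this
        _ = |q| + (t - s) := Real.sqrt_sq (by positivity)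
    have h3 : s ≤ √(z.im * w.im) := by
      rw [hwim, ← ht]
      calc s = √(s * s) := by rw [Real.sqrt_mul_self (le_of_lt hs0)]
        _ ≤ √(t * s) := Real.sqrt_le_sqrt (by nlinarith)
    gcongr 2 * Real.arsinh ?_
    rw [div_le_iff₀ (by positivity)]
    have habs : 0 ≤ |q| := abs_nonneg q
    nlinarith [mul_le_mul_of_nonneg_left h3 (show (0:ℝ) ≤ |q| + (r - 1) by linarith)]
  refine ⟨n, ?_⟩
  rw [Set.mem_smul_set_iff_inv_smul_mem]
  have : dist ((δ ^ (n:ℤ))⁻¹ • z) z₀ ≤ C := by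
    have heq : dist ((δ ^ (n:ℤ))⁻¹ • z) z₀ = dist z w := by
      conv_rhs => rw [show z = (δ ^ (n:ℤ)) • (δ ^ (n:ℤ))⁻¹ • z from (smul_inv_smul _ _).symm, hw]
      rw [dist_smul]
    rwa [heq]
  exact Metric.mem_closedBall.mpr this

lemma hyp_sq_ne_one (δ : SL(2,ℝ)) (hc : δ 1 0 = 0) (hh : IsHyperbolic δ) :
    (δ 0 0)^2 ≠ 1 := by
  have hdet := det_sl δ
  rw [hc, mul_zero, sub_zero] at hdet
  rw [_root_.IsHyperbolic, Matrix.trace_fin_two] at hh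
  intro h
  rcases mul_eq_zero.mp (show ((δ 0 0 : ℝ) - 1) * (δ 0 0 + 1) = 0 by nlinarith) with h1 | h1
  · have e1 : (δ 0 0 : ℝ) = 1 := by linarith
    rw [e1, one_mul] at hdet
    rw [e1, hdet] at hh
    norm_num at hh
  · have e1 : (δ 0 0 : ℝ) = -1 := by linarith
    rw [e1] at hdet
    have e2 : (δ 1 1 : ℝ) = -1 := by linarith
    rw [e1, e2] at hh
    norm_num at hh

lemma inv_entry_c (δ : SL(2,ℝ)) : (δ⁻¹) 1 0 = - δ 1 0 := by
  rw [Matrix.SpecialLinearGroup.SL2_inv_expl]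
  rfl

lemma inv_entry_a (δ : SL(2,ℝ)) : (δ⁻¹) 0 0 = δ 1 1 := by
  rw [Matrix.SpecialLinearGroup.SL2_inv_expl]
  rfl

lemma core (δ : SL(2,ℝ)) (hc : δ 1 0 = 0) (hh : IsHyperbolic δ) :
    ∃ K : Set ℍ, IsCompact K ∧ ∃ e : ℤ, e ≠ 0 ∧
      ∀ z : ℍ, z.re = 0 → 1 ≤ z.im → ∃ k : ℕ, z ∈ (δ ^ (e * (k : ℤ))) • K := by
  have ha2 := hyp_sq_ne_one δ hc hh
  by_cases h : 1 < (δ 0 0)^2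
  · obtain ⟨K, hK, hcov⟩ := core' δ hc h
    refine ⟨K, hK, 1, one_ne_zero, fun z hre him => ?_⟩
    obtain ⟨k, hk⟩ := hcov z hre him
    exact ⟨k, by rwa [one_mul]⟩
  · have hdet := det_sl δ
    rw [hc, mul_zero, sub_zero] at hdet
    have ha : (δ 0 0 : ℝ) ≠ 0 := by rintro h'; rw [h', zero_mul] at hdet; norm_num at hdet
    have hlt : (δ 0 0)^2 < 1 := lt_of_le_of_ne (not_lt.mp h) ha2
    have hc' : (δ⁻¹) 1 0 = 0 := by rw [inv_entry_c, hc, neg_zero]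
    have hr' : 1 < ((δ⁻¹) 0 0)^2 := by
      rw [inv_entry_a]
      nlinarith [sq_nonneg (δ 0 0), sq_nonneg (δ 1 1), sq_nonneg (δ 0 0 * δ 1 1 - 1)]
    obtain ⟨K, hK, hcov⟩ := core' δ⁻¹ hc' hr'
    refine ⟨K, hK, -1, by norm_num, fun z hre him => ?_⟩
    obtain ⟨k, hk⟩ := hcov z hre him
    refine ⟨k, ?_⟩
    rwa [_root_.inv_zpow, ← _root_.zpow_neg, neg_eq_neg_one_mul] at hk

lemma trace_conj (g γ : SL(2,ℝ)) :
    Matrix.trace ((g * γ * g⁻¹ : SL(2,ℝ)) : Matrix (Fin 2) (Fin 2) ℝ)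
      = Matrix.trace ((γ : SL(2,ℝ)) : Matrix (Fin 2) (Fin 2) ℝ) := by
  rw [Matrix.SpecialLinearGroup.coe_mul, Matrix.trace_mul_comm,
    ← Matrix.SpecialLinearGroup.coe_mul, inv_mul_cancel_left]

lemma fixed_vec (γ : SL(2,ℝ)) (p : RP1) (hγp : sl2Act γ p = p) :
    ∃ u : ℝˣ, (γ : Matrix (Fin 2) (Fin 2) ℝ).mulVec p.rep = (u : ℝ) • p.rep := by
  have h0 := hγp
  rw [sl2Act] at h0
  conv_lhs at h0 => rw [← p.mk_rep]
  rw [Projectivization.map_mk] at h0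
  conv_rhs at h0 => rw [← p.mk_rep]
  rw [Projectivization.mk_eq_mk_iff] at h0
  obtain ⟨u, hu⟩ := h0
  refine ⟨u, ?_⟩
  have h1 : (Matrix.SpecialLinearGroup.toLin' γ).toLinearMap p.rep
      = (γ : Matrix (Fin 2) (Fin 2) ℝ).mulVec p.rep := by
    simp [Matrix.SpecialLinearGroup.toLin'_apply, Matrix.toLin'_apply]
  rw [← h1, ← hu]
  ext i
  simp [Units.smul_def]

lemma assemble (γ : SL(2,ℝ)) (g : SL(2,ℝ)) (p : RP1)
    (hc : (g * γ * g⁻¹) 1 0 = 0) (hh : IsHyperbolic γ)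
    (hmap : ∀ z : ℍ, z ∈ ray p → ((g • z).re = 0 ∧ 1 ≤ (g • z).im)) :
    IsUniformConicalLimitPoint (Subgroup.zpowers γ) p := by
  set δ := g * γ * g⁻¹ with hδ
  have hhδ : IsHyperbolic δ := by rw [_root_.IsHyperbolic, hδ, trace_conj]; exact hh
  have ha2 := hyp_sq_ne_one δ hc hhδ
  obtain ⟨K, hK, e, he, hcov⟩ := core δ hc hhδ
  refine ⟨g⁻¹ • K, ?_, fun k => γ ^ (e * (k:ℤ)), ?_, ?_, ?_⟩
  · rw [← Set.image_smul]
    exact hK.image (isometry_smul ℍ g⁻¹).continuous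
  · intro m k hmk
    have hmk' : γ ^ (e*(m:ℤ)) = γ ^ (e*(k:ℤ)) := hmk
    have h2 : δ ^ (e*(m:ℤ)) = δ ^ (e*(k:ℤ)) := by
      rw [hδ, conj_zpow, conj_zpow, hmk']
    have h3 : e * (m:ℤ) = e * (k:ℤ) := sl2_zpow_injective δ hc ha2 h2
    exact_mod_cast mul_left_cancel₀ he h3
  · intro k; exact ⟨e * k, rfl⟩
  · intro z hz
    obtain ⟨hre, him⟩ := hmap z hz
    obtain ⟨k, hk⟩ := hcov (g • z) hre him
    refine Set.mem_iUnion.mpr ⟨k, ?_⟩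
    have h3 : z ∈ g⁻¹ • (δ ^ (e*(k:ℤ)) • K) := ⟨g • z, hk, by simp⟩
    rwa [smul_smul, hδ, conj_zpow,
      show g⁻¹ * (g * γ ^ (e*(k:ℤ)) * g⁻¹) = γ ^ (e*(k:ℤ)) * g⁻¹ by group,
      ← smul_smul] at h3

end Aux

/-- The fixed points of a hyperbolic element `γ` of `SL(2, ℝ)` are uniform conical limit
points of the cyclic group generated by `γ`. -/
theorem fixed_point_isUniformConicalLimitPoint_zpowers
    (γ : SL(2, ℝ)) (hγ : IsHyperbolic γ) (p : RP1) (hγp : sl2Act γ p = p) :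
    IsUniformConicalLimitPoint (Subgroup.zpowers γ) p := by
  obtain ⟨u, hvec⟩ := fixed_vec γ p hγp
  have hu0 := congrFun hvec 0
  have hu1 := congrFun hvec 1
  simp only [Matrix.mulVec, dotProduct, Fin.sum_univ_two, Pi.smul_apply,
    smul_eq_mul] at hu0 hu1
  by_cases h1 : p.rep 1 = 0
  · -- p = ∞
    have hrep0 : p.rep 0 ≠ 0 := by
      intro h0
      apply p.rep_nonzero
      funext i
      fin_cases i
      · exact h0
      · exact h1
    have hc : γ 1 0 = 0 := by
      rw [h1, mul_zero, mul_zero, add_zero] at hu1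
      exact (mul_eq_zero.mp hu1).resolve_right hrep0
    refine assemble γ 1 p (by simpa using hc) hγ ?_
    intro z hz
    rw [ray, if_pos h1] at hz
    simpa using hz
  · -- p = [x : 1]
    set x : ℝ := p.rep 0 / p.rep 1 with hx
    have J : p.rep 0 * (γ 1 0 * p.rep 0 + γ 1 1 * p.rep 1)
        = p.rep 1 * (γ 0 0 * p.rep 0 + γ 0 1 * p.rep 1) := by
      rw [hu0, hu1]; ring
    have hdetg : Matrix.det !![(0:ℝ),-1;1,-x] = 1 := by
      simp [Matrix.det_fin_two_of]
    set g : SL(2,ℝ) := ⟨!![(0:ℝ),-1;1,-x], hdetg⟩ with hg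
    have hg00 : g 0 0 = 0 := rfl
    have hg01 : g 0 1 = -1 := rfl
    have hg10 : g 1 0 = 1 := rfl
    have hg11 : g 1 1 = -x := rfl
    have hc : (g * γ * g⁻¹) 1 0 = 0 := by
      rw [Matrix.SpecialLinearGroup.coe_mul, Matrix.SpecialLinearGroup.coe_mul,
        Matrix.SpecialLinearGroup.coe_inv, Matrix.adjugate_fin_two]
      simp only [Matrix.mul_apply, Fin.sum_univ_two, Matrix.of_apply, Matrix.cons_val',
        Matrix.cons_val_zero, Matrix.cons_val_one, Matrix.head_cons, Matrix.empty_val',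
        Matrix.cons_val_fin_one, Matrix.head_fin_const]
      rw [hg10, hg11, hx]
      field_simp
      linear_combination J
    refine assemble γ g p hc hγ ?_
    intro z hz
    rw [ray, if_neg h1] at hz
    obtain ⟨hre, him⟩ := hz
    have him0 : (0:ℝ) < z.im := z.im_pos
    have hzim : ((z.im : ℝ) : ℂ) ≠ 0 := by exact_mod_cast ne_of_gt him0
    have hzc : (z : ℂ) = (x : ℂ) + (z.im : ℂ) * Complex.I := by
      apply Complex.ext
      · simp [UpperHalfPlane.coe_re, hre, hx]
      · simp
    have hval : ((g • z : ℍ) : ℂ) = ((z.im : ℝ) : ℂ)⁻¹ * Complex.I := by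
      rw [coe_sl_smul, hg00, hg01, hg10, hg11, hzc]
      push_cast
      rw [div_eq_iff (by
        intro h
        apply hzim
        have := congrArg Complex.im h
        simpa using this)]
      field_simp
      ring_nf
      simp [Complex.I_sq]
    constructor
    · rw [← UpperHalfPlane.coe_re, hval]
      simp
    · rw [← UpperHalfPlane.coe_im, hval]
      have : (((z.im : ℝ) : ℂ)⁻¹ * Complex.I).im = (z.im)⁻¹ := by
        rw [← Complex.ofReal_inv]
        simp
      rw [this]
      rw [le_inv_comm₀ one_pos him0]
      simpa using him

end
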